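/- For any n-agent instance with monotone valuations and any integer 1 ≤ c ≤ n: if C is a uniformly random c-element subset of [n], and π is any full action sequence whose prefix of length c is a subsequence S' of agents in C maximizing ∑_{i∈C} v_i(S^i) over all orderings S of C, then E[SW(π)] ≥ (c/n)·SW(π̃), where π̃ is an optimal action sequence. That is, the randomized algorithm Rand achieves approximation ratio n/c in expectation. -/

import Mathlib

/-- The agents that precede `i` in the action (sub)sequence `π`. -/
def prefixBefore {n : ℕ} (π : List (Fin n)) (i : Fin n) : List (Fin n) :=
  π.takeWhile (fun j => j != i)

/-- A full action sequence: an ordering of all `n` agents. -/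
def IsSeq {n : ℕ} (π : List (Fin n)) : Prop :=
  π.Nodup ∧ ∀ i : Fin n, i ∈ π

/-- Social welfare of a full action sequence. -/
noncomputable def SW {n : ℕ} (v : Fin n → List (Fin n) → ℝ) (π : List (Fin n)) : ℝ :=
  ∑ i : Fin n, v i (prefixBefore π i)

/-- Total value obtained by the agents of a subsequence acting in order. -/
noncomputable def valSum {n : ℕ} (v : Fin n → List (Fin n) → ℝ) (S : List (Fin n)) : ℝ :=
  (S.map fun i => v i (prefixBefore S i)).sum

/-- If `i` occurs in the first `c` entries, the prefix before `i` in the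
truncation agrees with the prefix before `i` in the full list. -/
lemma prefixBefore_take {n : ℕ} (i : Fin n) :
    ∀ (L : List (Fin n)) (c : ℕ), i ∈ L.take c →
      prefixBefore (L.take c) i = prefixBefore L i := by
  intro L
  induction L with
  | nil => intro c h; simp at h
  | cons a L ih =>
    intro c h
    cases c with
    | zero => simp at h
    | succ c =>
      simp only [List.take_succ_cons] at h ⊢
      by_cases hai : a = i
      · subst hai
        simp [prefixBefore, List.takeWhile]
      · have hiT : i ∈ L.take c := by
          rcases List.mem_cons.1 h with h1 | h1
          · exact absurd h1.symm hai
          · exact h1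
        have hb : (a != i) = true := by simpa using hai
        simp only [prefixBefore, List.takeWhile, hb]
        simpa [prefixBefore] using ih c hiT

/-- Monotone prefix structure: for a sublist `T` of a nodup list `l`, the
prefix before `i ∈ T` in `T` is a sublist of the prefix before `i` in `l`. -/
lemma prefixBefore_sublist {n : ℕ} (i : Fin n) {T l : List (Fin n)}
    (h : T.Sublist l) (hnd : l.Nodup) (hi : i ∈ T) :
    (prefixBefore T i).Sublist (prefixBefore l i) := by
  induction h with
  | slnil => simp at hi
  | @cons T l a h ih =>
    have hnd' : l.Nodup := (List.nodup_cons.1 hnd).2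
    by_cases hai : a = i
    · subst hai
      exact absurd (h.subset hi) (List.nodup_cons.1 hnd).1
    · have hb : (a != i) = true := by simpa using hai
      simp only [prefixBefore, List.takeWhile, hb]
      exact (ih hnd' hi).trans (List.sublist_cons_self _ _)
  | @cons_cons T l a h ih =>
    have hnd' : l.Nodup := (List.nodup_cons.1 hnd).2
    by_cases hai : a = i
    · subst hai
      simp [prefixBefore, List.takeWhile]
    · have hb : (a != i) = true := by simpa using hai
      have hiT : i ∈ T := by
        rcases List.mem_cons.1 hi with h1 | h1
        · exact absurd h1.symm hai
        · exact h1
      simp only [prefixBefore, List.takeWhile, hb]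
      exact (ih hnd' hiT).cons₂ a

/-- `valSum` of a nodup list as a finset sum. -/
lemma valSum_eq_sum {n : ℕ} (v : Fin n → List (Fin n) → ℝ) (T : List (Fin n))
    (hnd : T.Nodup) :
    valSum v T = ∑ i ∈ T.toFinset, v i (prefixBefore T i) := by
  rw [valSum, List.sum_toFinset _ hnd]

/-- Count of `c`-subsets of `univ : Finset (Fin n)` containing a fixed element. -/
lemma card_filter_mem_powersetCard {n c : ℕ} (hc1 : 1 ≤ c) (i : Fin n) :
    ((Finset.univ.powersetCard c : Finset (Finset (Fin n))).filter
      (fun C => i ∈ C)).card = (n - 1).choose (c - 1) := by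
  have : ((Finset.univ.powersetCard c : Finset (Finset (Fin n))).filter
      (fun C => i ∈ C)).card
      = ((Finset.univ.erase i).powersetCard (c - 1)).card := by
    apply Finset.card_bij (fun C _ => C.erase i)
    · intro C hC
      simp only [Finset.mem_filter, Finset.mem_powersetCard] at hC
      refine Finset.mem_powersetCard.2 ⟨?_, ?_⟩
      · intro x hx
        exact Finset.mem_erase.2 ⟨(Finset.mem_erase.1 hx).1, Finset.mem_univ x⟩
      · rw [Finset.card_erase_of_mem hC.2, hC.1.2]
    · intro C hC D hD h
      simp only [Finset.mem_filter] at hC hD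
      rw [← Finset.insert_erase hC.2, ← Finset.insert_erase hD.2, h]
    · intro D hD
      simp only [Finset.mem_powersetCard] at hD
      have hiD : i ∉ D := fun h => (Finset.mem_erase.1 (hD.1 h)).1 rfl
      refine ⟨insert i D, ?_, ?_⟩
      · simp only [Finset.mem_filter, Finset.mem_powersetCard]
        refine ⟨⟨Finset.subset_univ _, ?_⟩, Finset.mem_insert_self i D⟩
        rw [Finset.card_insert_of_notMem hiD, hD.2]
        omega
      · rw [Finset.erase_insert hiD]
  rw [this, Finset.card_powersetCard]
  congr 1
  rw [Finset.card_erase_of_mem (Finset.mem_univ i), Finset.card_univ, Fintype.card_fin]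

/-- the Rand algorithm achieves an `n/c` approximation in expectation,
where the expectation over the uniformly random `c`-subset `C` is written as an
average over all `c`-element subsets of `[n]`. -/
theorem stmt1 {n c : ℕ} (hc1 : 1 ≤ c) (hcn : c ≤ n)
    (v : Fin n → List (Fin n) → ℝ)
    (hnn : ∀ i S, 0 ≤ v i S)
    (hmono : ∀ (i : Fin n) (S S' : List (Fin n)), S'.Sublist S → v i S ≤ v i S')
    (πopt : List (Fin n)) (hseq : IsSeq πopt)
    (hopt : ∀ σ, IsSeq σ → SW v σ ≤ SW v πopt)
    (π : Finset (Fin n) → List (Fin n))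
    (hπ : ∀ C ∈ Finset.univ.powersetCard c, IsSeq (π C) ∧
        ((π C).take c).toFinset = C ∧
        ∀ T : List (Fin n), T.Nodup → T.toFinset = C →
          valSum v T ≤ valSum v ((π C).take c)) :
    (c : ℝ) / n * SW v πopt ≤
      (∑ C ∈ Finset.univ.powersetCard c, SW v (π C)) / (n.choose c) := by
  have hn1 : 1 ≤ n := le_trans hc1 hcn
  set P := (Finset.univ.powersetCard c : Finset (Finset (Fin n))) with hP
  -- Step 1: for each C ∈ P, SW v (π C) ≥ ∑ i in C, v i (prefixBefore πopt i)
  have key : ∀ C ∈ P, ∑ i ∈ C, v i (prefixBefore πopt i) ≤ SW v (π C) := by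
    intro C hC
    obtain ⟨⟨hnd, hmem⟩, htf, hbest⟩ := hπ C hC
    -- the restriction of πopt to C
    set T : List (Fin n) := πopt.filter (fun j => j ∈ C) with hT
    have hTnd : T.Nodup := hseq.1.filter _
    have hTf : T.toFinset = C := by
      ext x
      simp [hT, List.mem_filter, hseq.2 x]
    -- ∑ i in C, v i (prefixBefore πopt i) ≤ valSum v T
    have h1 : ∑ i ∈ C, v i (prefixBefore πopt i) ≤ valSum v T := by
      rw [valSum_eq_sum v T hTnd, hTf]
      apply Finset.sum_le_sum
      intro i hi
      have hiT : i ∈ T := by rw [← hTf] at hi; exact List.mem_toFinset.1 hi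
      exact hmono i _ _ (prefixBefore_sublist i List.filter_sublist hseq.1 hiT)
    have h2 : valSum v T ≤ valSum v ((π C).take c) := hbest T hTnd hTf
    -- valSum v ((π C).take c) ≤ SW v (π C)
    have h3 : valSum v ((π C).take c) ≤ SW v (π C) := by
      have hndtake : ((π C).take c).Nodup := hnd.sublist (List.take_sublist _ _)
      rw [valSum_eq_sum v _ hndtake, SW]
      have heq : ∀ i ∈ ((π C).take c).toFinset,
          v i (prefixBefore ((π C).take c) i) = v i (prefixBefore (π C) i) := by
        intro i hi
        rw [prefixBefore_take i (π C) c (List.mem_toFinset.1 hi)]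
      rw [Finset.sum_congr rfl heq]
      exact Finset.sum_le_sum_of_subset_of_nonneg (Finset.subset_univ _)
        (fun i _ _ => hnn i _)
    linarith
  -- Step 2: sum over C and count
  have hcount : ∑ C ∈ P, ∑ i ∈ C, v i (prefixBefore πopt i)
      = ((n - 1).choose (c - 1) : ℝ) * SW v πopt := by
    have : ∑ C ∈ P, ∑ i ∈ C, v i (prefixBefore πopt i)
        = ∑ C ∈ P, ∑ i : Fin n, if i ∈ C then v i (prefixBefore πopt i) else 0 := by
      apply Finset.sum_congr rfl
      intro C _
      rw [Finset.sum_ite_mem, Finset.univ_inter]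
    rw [this, Finset.sum_comm]
    rw [SW, Finset.mul_sum]
    apply Finset.sum_congr rfl
    intro i _
    rw [Finset.sum_ite, Finset.sum_const_zero, add_zero, Finset.sum_const,
      nsmul_eq_mul, card_filter_mem_powersetCard hc1 i]
  have hsum : ((n - 1).choose (c - 1) : ℝ) * SW v πopt
      ≤ ∑ C ∈ P, SW v (π C) := by
    rw [← hcount]
    exact Finset.sum_le_sum key
  -- Step 3: arithmetic
  have hchoose_pos : (0 : ℝ) < (n.choose c : ℝ) := by
    exact_mod_cast Nat.choose_pos hcn
  rw [le_div_iff₀ hchoose_pos]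
  have hSWnn : 0 ≤ SW v πopt := Finset.sum_nonneg fun i _ => hnn i _
  have hid : (c : ℝ) * (n.choose c : ℝ) = (n : ℝ) * ((n - 1).choose (c - 1) : ℝ) := by
    have := Nat.add_one_mul_choose_eq (n - 1) (c - 1)
    have h1 : n - 1 + 1 = n := by omega
    have h2 : c - 1 + 1 = c := by omega
    rw [h1, h2] at this
    have h3 : c * n.choose c = n * (n - 1).choose (c - 1) := by
      rw [this]; ring
    exact_mod_cast congrArg (Nat.cast : ℕ → ℝ) h3
  have hnpos : (0 : ℝ) < n := by exact_mod_cast hn1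
  calc (c : ℝ) / n * SW v πopt * (n.choose c)
      = (c : ℝ) * (n.choose c) / n * SW v πopt := by ring
    _ = ((n - 1).choose (c - 1) : ℝ) * SW v πopt := by
        rw [hid]; field_simp
    _ ≤ ∑ C ∈ P, SW v (π C) := hsum
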